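/- If G is the disjoint union of a graph H with c−2 copies of the star K_{1,k} (where c > 2), then G is in (c,k)-LCP if and only if H is in (2,k)-LCP. -/

import Mathlib

open Finset

open scoped Classical in
/-- `G ∈ (c,k)`-LCP: there is a `c`-coloring such that each color has at least `k`
monochromatic edges. -/
def LCP {V : Type*} [Fintype V] (G : SimpleGraph V) (c k : ℕ) : Prop :=
  ∃ φ : V → Fin c, ∀ i : Fin c,
    k ≤ (G.edgeFinset.filter (fun e => ∀ v ∈ e, φ v = i)).card

/-- The disjoint union of `c` copies of the star `K_{1,k}`: in each copy `j`,
the center `(j, 0)` is adjacent to the `k` leaves `(j, a)`, `a ≠ 0`. -/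
def stars (c k : ℕ) : SimpleGraph (Fin c × Fin (k + 1)) where
  Adj x y := x.1 = y.1 ∧ (x.2 = 0 ∧ y.2 ≠ 0 ∨ y.2 = 0 ∧ x.2 ≠ 0)
  symm := ⟨by intro x y h; exact ⟨h.1.symm, h.2.symm⟩⟩
  loopless := ⟨by rintro x ⟨-, h⟩; rcases h with ⟨h1, h2⟩ | ⟨h1, h2⟩ <;> exact h2 h1⟩

open scoped Classical in
/-- If every monochromatic (color `i`) edge of `G` is the image under `Sym2.map f` of a
monochromatic (color `t`) edge of `H`, then `H` has at least as many such edges. -/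
lemma lcp_aux {V W : Type*} [Fintype V] [Fintype W] (G : SimpleGraph V) (H : SimpleGraph W)
    (k : ℕ) {c : ℕ} (φ : V → Fin c) (i : Fin c) (ψ : W → Fin 2) (t : Fin 2)
    (f : W → V)
    (hedge : ∀ e ∈ G.edgeFinset.filter (fun e => ∀ v ∈ e, φ v = i),
      ∃ e' ∈ H.edgeFinset.filter (fun e => ∀ v ∈ e, ψ v = t), Sym2.map f e' = e)
    (hk : k ≤ (G.edgeFinset.filter (fun e => ∀ v ∈ e, φ v = i)).card) :
    k ≤ (H.edgeFinset.filter (fun e => ∀ v ∈ e, ψ v = t)).card := by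
  refine hk.trans (Finset.card_le_card_of_surjOn (Sym2.map f) ?_)
  intro e he
  obtain ⟨e', he', heq⟩ := hedge e he
  exact ⟨e', he', heq⟩

open scoped Classical in
/-- An injection from a finset of size at least `k` into the monochromatic edges of color
`i` shows that color `i` has at least `k` monochromatic edges. -/
lemma lcp_aux2 {V α : Type*} [Fintype V] (G : SimpleGraph V) (k : ℕ) {c : ℕ}
    (φ : V → Fin c) (i : Fin c) (s : Finset α) (F : α → Sym2 V)
    (hmap : ∀ a ∈ s, F a ∈ G.edgeFinset.filter (fun e => ∀ v ∈ e, φ v = i))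
    (hinj : Set.InjOn F s) (hs : k ≤ s.card) :
    k ≤ (G.edgeFinset.filter (fun e => ∀ v ∈ e, φ v = i)).card :=
  hs.trans (Finset.card_le_card_of_injOn F hmap hinj)

open scoped Classical in
theorem stmt_4 {W : Type*} [Fintype W] (H : SimpleGraph W) (c k : ℕ) (hc : 2 < c) :
    LCP (H ⊕g stars (c - 2) k) c k ↔ LCP H 2 k := by
  constructor
  · rintro ⟨φ, hφ⟩
    set f : Fin (c - 2) → Fin c := fun j => φ (Sum.inr (j, 0)) with hf
    have h2 : 1 < ((Finset.univ : Finset (Fin c)) \ Finset.univ.image f).card := by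
      rw [Finset.card_sdiff_of_subset (Finset.subset_univ _)]
      have hcard : (Finset.univ.image f).card ≤ c - 2 :=
        Finset.card_image_le.trans (by simp)
      simp only [Finset.card_univ, Fintype.card_fin]
      omega
    obtain ⟨i₁, hi₁, i₂, hi₂, hne⟩ := Finset.one_lt_card.mp h2
    rw [Finset.mem_sdiff, Finset.mem_image] at hi₁ hi₂
    have hi₁' : ∀ j : Fin (c - 2), φ (Sum.inr (j, 0)) ≠ i₁ := by
      intro j hj; exact hi₁.2 ⟨j, Finset.mem_univ j, hj⟩
    have hi₂' : ∀ j : Fin (c - 2), φ (Sum.inr (j, 0)) ≠ i₂ := by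
      intro j hj; exact hi₂.2 ⟨j, Finset.mem_univ j, hj⟩
    set ψ : W → Fin 2 := fun w => if φ (Sum.inl w) = i₁ then 0 else 1 with hψdef
    have main : ∀ (i : Fin c) (t : Fin 2), (∀ j : Fin (c - 2), φ (Sum.inr (j, 0)) ≠ i) →
        (∀ w : W, φ (Sum.inl w) = i → ψ w = t) →
        k ≤ (H.edgeFinset.filter (fun e => ∀ v ∈ e, ψ v = t)).card := by
      intro i t hi hit
      refine lcp_aux (H ⊕g stars (c - 2) k) H k φ i ψ t Sum.inl ?_ (hφ i)
      intro e
      induction e using Sym2.ind with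
      | _ x y =>
        intro he
        simp only [Finset.mem_filter, SimpleGraph.mem_edgeFinset, SimpleGraph.mem_edgeSet] at he
        obtain ⟨hadj, hcol⟩ := he
        match x, y with
        | Sum.inl a, Sum.inl b =>
          refine ⟨s(a, b), ?_, by simp⟩
          simp only [Finset.mem_filter, SimpleGraph.mem_edgeFinset, SimpleGraph.mem_edgeSet]
          refine ⟨by rw [SimpleGraph.sum_adj] at hadj; exact hadj, ?_⟩
          intro v hv
          rw [Sym2.mem_iff] at hv
          rcases hv with rfl | rfl
          · exact hit _ (hcol _ (Sym2.mem_mk_left _ _))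
          · exact hit _ (hcol _ (Sym2.mem_mk_right _ _))
        | Sum.inl a, Sum.inr p => exact absurd hadj (by simp [SimpleGraph.sum_adj])
        | Sum.inr p, Sum.inl a => exact absurd hadj (by simp [SimpleGraph.sum_adj])
        | Sum.inr p, Sum.inr q =>
          exfalso
          rw [SimpleGraph.sum_adj] at hadj
          obtain ⟨h1, h2⟩ := hadj
          rcases h2 with ⟨hp, -⟩ | ⟨hq, -⟩
          · exact hi p.1 (by
              have := hcol _ (Sym2.mem_mk_left (Sum.inr p) (Sum.inr q))
              rwa [show p = (p.1, 0) from Prod.ext rfl hp] at this)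
          · exact hi q.1 (by
              have := hcol _ (Sym2.mem_mk_right (Sum.inr p) (Sum.inr q))
              rwa [show q = (q.1, 0) from Prod.ext rfl hq] at this)
    refine ⟨ψ, ?_⟩
    intro t
    fin_cases t
    · exact main i₁ 0 hi₁' (fun w hw => by simp [hψdef, hw])
    · refine main i₂ 1 hi₂' (fun w hw => ?_)
      have hne1 : φ (Sum.inl w) ≠ i₁ := by rw [hw]; exact fun h => hne h.symm
      simp [hψdef, hne1]
  · rintro ⟨ψ, hψ⟩
    set φ : W ⊕ (Fin (c - 2) × Fin (k + 1)) → Fin c :=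
      Sum.elim (fun w => ⟨(ψ w).val, by have := (ψ w).isLt; omega⟩)
        (fun p => ⟨p.1.val + 2, by have := p.1.isLt; omega⟩) with hφdef
    refine ⟨φ, ?_⟩
    intro i
    by_cases hilt : i.val < 2
    · refine lcp_aux2 (H ⊕g stars (c - 2) k) k φ i
        (H.edgeFinset.filter (fun e => ∀ v ∈ e, ψ v = ⟨i.val, hilt⟩))
        (Sym2.map Sum.inl) ?_ ?_ (hψ ⟨i.val, hilt⟩)
      · intro e he
        simp only [Finset.mem_filter, SimpleGraph.mem_edgeFinset] at he ⊢
        obtain ⟨hadj, hcol⟩ := he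
        constructor
        · have := ((SimpleGraph.Embedding.sumInl :
            H ↪g H ⊕g stars (c - 2) k).toHom.mapEdgeSet ⟨e, hadj⟩).2
          simpa [SimpleGraph.Embedding.sumInl] using this
        · intro v hv
          rw [Sym2.mem_map] at hv
          obtain ⟨w, hw, rfl⟩ := hv
          have := hcol w hw
          simp only [hφdef, Sum.elim_inl]
          exact Fin.ext (by show (ψ w).val = i.val; rw [this])
      · exact Set.InjOn.mono (Set.subset_univ _)
          (Set.injOn_of_injective (Sym2.map.injective Sum.inl_injective))
    · set j : Fin (c - 2) := ⟨i.val - 2, by have := i.isLt; omega⟩ with hj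
      have hjval : j.val + 2 = i.val := by simp [hj]; omega
      refine lcp_aux2 (H ⊕g stars (c - 2) k) k φ i
        ((Finset.univ : Finset (Fin (k + 1))).erase 0)
        (fun a => s(Sum.inr (j, 0), Sum.inr (j, a))) ?_ ?_ ?_
      · intro a ha
        rw [Finset.mem_erase] at ha
        simp only [Finset.mem_filter, SimpleGraph.mem_edgeFinset, SimpleGraph.mem_edgeSet]
        constructor
        · rw [SimpleGraph.sum_adj]
          exact ⟨rfl, Or.inl ⟨rfl, ha.1⟩⟩
        · intro v hv
          rw [Sym2.mem_iff] at hv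
          rcases hv with rfl | rfl <;>
            · simp only [hφdef, Sum.elim_inr]
              exact Fin.ext (by simp [hjval])
      · intro a ha b hb heq
        have := Sym2.congr_right.mp heq
        simpa using this
      · rw [Finset.card_erase_of_mem (Finset.mem_univ _)]
        simp
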